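/- (Theorem 5.3, zero-range system, closed-closed network, detailed balance) Fix M ≥ 1 and N ∈ ℕ. Suppose the symmetry conditions hold: β_{kl}(n_k,n_l;y) = β_{lk}(n_l+1,n_k−1;y) for k ≠ l, y_k = y_l = 0, n_k ≥ 1; θ_{jk}(n_j,n_k;y) = θ_{kj}(n_k+1,n_j−1;y) for y_j ≥ 1, y_k = 0, n_j ≥ 1; (5.8) ε_{ij}(n_i,n_j;y)·[γ_i(n_i−1)]^{y_i} = [γ_j(n_j)]^{y_j}·ε_{ji}(n_j+1,n_i−1;y) for i ≠ j, y_i ≥ 1, y_j ≥ 1, n_i ≥ 1; and τ_{jj'}(n;y) = τ_{j'j}(n;y+e^{j→j'}) for y_j ≥ 1, j' ≠ j. Then on {(y,n) : |y| = M, |n| = N} the weight w(y,n) = ∏_{q∈Λ} [γ̄_q(n_q)]^{y_q} satisfies the detailed balance equations: (i) w(y,n)·β_{kl}(n_k,n_l;y) = w(y, n+e^{k→l})·β_{lk}(n_l+1,n_k−1;y) for y_k = y_l = 0, k ≠ l, n_k ≥ 1; (ii) w(y,n)·ε_{ij}(n_i,n_j;y) = w(y, n+e^{i→j})·ε_{ji}(n_j+1,n_i−1;y)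 for y_i ≥ 1, y_j ≥ 1, i ≠ j, n_i ≥ 1; (iii) w(y,n)·θ_{jk}(n_j,n_k;y) = w(y, n+e^{j→k})·θ_{kj}(n_k+1,n_j−1;y)·[γ_j(n_j−1)]^{y_j} for y_j ≥ 1, y_k = 0, n_j ≥ 1; (iv) w(y,n)·θ_{kj}(n_k,n_j;y)·[γ_j(n_j)]^{y_j} = w(y, n+e^{k→j})·θ_{jk}(n_j+1,n_k−1;y) for y_j ≥ 1, y_k = 0, n_k ≥ 1; (v) w(y,n)·[γ̄_j(n_j)]^{−y_j}·τ_{jj'}(n;y)·[γ̄_{j'}(n_{j'})]^{−y_{j'}} = w(y', n)·[γ̄_j(n_j)]^{−y'_j}·τ_{j'j}(n;y')·[γ̄_{j'}(n_{j'})]^{−y'_{j'}}, where y' = y + e^{j→j'}, for y_j ≥ 1, j' ≠ j. -/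

import Mathlib

/-- The `e^k` configuration increment: `n + e^k`. -/
def bump {Λ : Type*} [DecidableEq Λ] (n : Λ → ℕ) (k : Λ) : Λ → ℕ :=
  fun l => n l + (if l = k then 1 else 0)

/-- The jump move `n + e^{i→k} = n - e^i + e^k`. -/
def move {Λ : Type*} [DecidableEq Λ] (n : Λ → ℕ) (i k : Λ) : Λ → ℕ :=
  fun l => n l - (if l = i then 1 else 0) + (if l = k then 1 else 0)

/-- Theorem 5.3, zero-range system, closed-closed network,
detailed balance: under the symmetry conditions (including (5.8)), on
`{(y,n) : |y|=M, |n|=N}` the weights `w(y,n) = ∏_q [γ̄_q(n_q)]^{y_q}` satisfy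
detailed balance. Here `y : Λ → ℕ` counts distinguished customers per site. -/
theorem zero_range_closed_closed_detailed_balance
    (Λ : Type*) [Fintype Λ] [DecidableEq Λ] [Nonempty Λ]
    (M : ℕ) (hM : 1 ≤ M) (N : ℕ)
    (gam : Λ → ℕ → ℝ)
    (hgam : ∀ p m, 0 < gam p m) (hgam0 : ∀ p, gam p 0 = 1)
    (gamBar : Λ → ℕ → ℝ)
    (hgamBar : ∀ p m, gamBar p m = ∏ u ∈ Finset.range m, gam p u)
    (β θ ε : Λ → Λ → ℕ → ℕ → (Λ → ℕ) → ℝ) (τ : Λ → Λ → (Λ → ℕ) → (Λ → ℕ) → ℝ)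
    (hβnn : ∀ k l a b y, 0 ≤ β k l a b y) (hθnn : ∀ j k a b y, 0 ≤ θ j k a b y)
    (hεnn : ∀ i j a b y, 0 ≤ ε i j a b y) (hτnn : ∀ j j' n y, 0 ≤ τ j j' n y)
    -- symmetry conditions
    (hβ : ∀ (y : Λ → ℕ) (k l : Λ) (a b : ℕ),
      k ≠ l → y k = 0 → y l = 0 → 1 ≤ a →
      β k l a b y = β l k (b + 1) (a - 1) y)
    (hθ : ∀ (y : Λ → ℕ) (j k : Λ) (a b : ℕ),
      1 ≤ y j → y k = 0 → 1 ≤ a →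
      θ j k a b y = θ k j (b + 1) (a - 1) y)
    -- (5.8)
    (hε : ∀ (y : Λ → ℕ) (i j : Λ) (a b : ℕ),
      i ≠ j → 1 ≤ y i → 1 ≤ y j → 1 ≤ a →
      ε i j a b y * gam i (a - 1) ^ (y i) =
        gam j b ^ (y j) * ε j i (b + 1) (a - 1) y)
    (hτ : ∀ (y : Λ → ℕ) (j j' : Λ) (n : Λ → ℕ),
      1 ≤ y j → j' ≠ j → τ j j' n y = τ j' j n (move y j j'))
    (w : (Λ → ℕ) → (Λ → ℕ) → ℝ)
    (hw : ∀ (y n : Λ → ℕ), w y n = ∏ q, gamBar q (n q) ^ (y q)) :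
    ∀ (y : Λ → ℕ), ∑ s, y s = M → ∀ n : Λ → ℕ, ∑ s, n s = N →
      -- (i) task jump between unloaded sites
      (∀ k l, y k = 0 → y l = 0 → k ≠ l → 1 ≤ n k →
        w y n * β k l (n k) (n l) y =
          w y (move n k l) * β l k (n l + 1) (n k - 1) y) ∧
      -- (ii) task jump between loaded sites
      (∀ i j, 1 ≤ y i → 1 ≤ y j → i ≠ j → 1 ≤ n i →
        w y n * ε i j (n i) (n j) y =
          w y (move n i j) * ε j i (n j + 1) (n i - 1) y) ∧
      -- (iii) task jump from a loaded to an unloaded site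
      (∀ j k, 1 ≤ y j → y k = 0 → 1 ≤ n j →
        w y n * θ j k (n j) (n k) y =
          w y (move n j k) *
            (θ k j (n k + 1) (n j - 1) y * gam j (n j - 1) ^ (y j))) ∧
      -- (iv) task jump from an unloaded to a loaded site
      (∀ j k, 1 ≤ y j → y k = 0 → 1 ≤ n k →
        w y n * (θ k j (n k) (n j) y * gam j (n j) ^ (y j)) =
          w y (move n k j) * θ j k (n j + 1) (n k - 1) y) ∧
      -- (v) leap of a distinguished customer
      (∀ j j', 1 ≤ y j → j' ≠ j →
        w y n * (gamBar j (n j) ^ (y j))⁻¹ * τ j j' n y *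
            (gamBar j' (n j') ^ (y j'))⁻¹ =
          w (move y j j') n * (gamBar j (n j) ^ (move y j j' j))⁻¹ *
            τ j' j n (move y j j') *
            (gamBar j' (n j') ^ (move y j j' j'))⁻¹) := by
  have gamBar_pos : ∀ p m, 0 < gamBar p m := fun p m => by
    rw [hgamBar]; exact Finset.prod_pos fun u _ => hgam p u
  have gamBar_succ : ∀ p m, gamBar p (m + 1) = gamBar p m * gam p m := fun p m => by
    rw [hgamBar, hgamBar, Finset.prod_range_succ]
  have gamBar_pred : ∀ p m, 1 ≤ m → gamBar p m = gamBar p (m - 1) * gam p (m - 1) := by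
    intro p m hm
    conv_lhs => rw [show m = (m - 1) + 1 by omega]
    exact gamBar_succ p (m - 1)
  intro y hy n hn
  have key : ∀ (i k : Λ), i ≠ k → ∀ (Y N : Λ → ℕ),
      (∏ q, gamBar q (N q) ^ Y q) =
        gamBar i (N i) ^ Y i * gamBar k (N k) ^ Y k *
          ∏ q ∈ Finset.univ \ ({i, k} : Finset Λ), gamBar q (N q) ^ Y q := by
    intro i k hik Y N
    rw [← Finset.prod_sdiff (Finset.subset_univ ({i, k} : Finset Λ)), Finset.prod_pair hik]
    ring
  have tail2 : ∀ (i k : Λ) (f g : Λ → ℝ), (∀ q, q ≠ i → q ≠ k → f q = g q) →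
      ∏ q ∈ Finset.univ \ ({i, k} : Finset Λ), f q
        = ∏ q ∈ Finset.univ \ ({i, k} : Finset Λ), g q := by
    intro i k f g h
    refine Finset.prod_congr rfl fun q hq => ?_
    simp only [Finset.mem_sdiff, Finset.mem_insert, Finset.mem_singleton, Finset.mem_univ,
      true_and] at hq
    push_neg at hq
    exact h q hq.1 hq.2
  refine ⟨?_, ?_, ?_, ?_, ?_⟩
  · -- (i)
    intro k l hyk hyl hkl hnk
    have hmv1 : move n k l k = n k - 1 := by simp [move, hkl]
    have hmv2 : move n k l l = n l + 1 := by simp [move, hkl.symm]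
    have e1 : w y n = gamBar k (n k) ^ y k * gamBar l (n l) ^ y l *
        ∏ q ∈ Finset.univ \ ({k, l} : Finset Λ), gamBar q (n q) ^ y q := by
      rw [hw]; exact key k l hkl y n
    have e2 : w y (move n k l) = gamBar k (n k - 1) ^ y k * gamBar l (n l + 1) ^ y l *
        ∏ q ∈ Finset.univ \ ({k, l} : Finset Λ), gamBar q (n q) ^ y q := by
      rw [hw, key k l hkl y (move n k l), hmv1, hmv2]
      congr 1
      exact tail2 k l _ _ (fun q h1 h2 => by simp [move, h1, h2])
    rw [e1, e2, hyk, hyl, hβ y k l (n k) (n l) hkl hyk hyl hnk]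
    ring
  · -- (ii)
    intro i j hyi hyj hij hni
    have hεs := hε y i j (n i) (n j) hij hyi hyj hni
    have hmv1 : move n i j i = n i - 1 := by simp [move, hij]
    have hmv2 : move n i j j = n j + 1 := by simp [move, hij.symm]
    have e1 : w y n = gamBar i (n i) ^ y i * gamBar j (n j) ^ y j *
        ∏ q ∈ Finset.univ \ ({i, j} : Finset Λ), gamBar q (n q) ^ y q := by
      rw [hw]; exact key i j hij y n
    have e2 : w y (move n i j) = gamBar i (n i - 1) ^ y i * gamBar j (n j + 1) ^ y j *
        ∏ q ∈ Finset.univ \ ({i, j} : Finset Λ), gamBar q (n q) ^ y q := by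
      rw [hw, key i j hij y (move n i j), hmv1, hmv2]
      congr 1
      exact tail2 i j _ _ (fun q h1 h2 => by simp [move, h1, h2])
    rw [e1, e2, gamBar_pred i (n i) hni, gamBar_succ j (n j)]
    linear_combination (gamBar i (n i - 1) ^ y i * gamBar j (n j) ^ y j *
      ∏ q ∈ Finset.univ \ ({i, j} : Finset Λ), gamBar q (n q) ^ y q) * hεs
  · -- (iii)
    intro j k hyj hyk hnj
    have hjk : j ≠ k := fun h => by rw [h] at hyj; omega
    have hθs := hθ y j k (n j) (n k) hyj hyk hnj
    have hmv1 : move n j k j = n j - 1 := by simp [move, hjk]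
    have hmv2 : move n j k k = n k + 1 := by simp [move, hjk.symm]
    have e1 : w y n = gamBar j (n j) ^ y j * gamBar k (n k) ^ y k *
        ∏ q ∈ Finset.univ \ ({j, k} : Finset Λ), gamBar q (n q) ^ y q := by
      rw [hw]; exact key j k hjk y n
    have e2 : w y (move n j k) = gamBar j (n j - 1) ^ y j * gamBar k (n k + 1) ^ y k *
        ∏ q ∈ Finset.univ \ ({j, k} : Finset Λ), gamBar q (n q) ^ y q := by
      rw [hw, key j k hjk y (move n j k), hmv1, hmv2]
      congr 1
      exact tail2 j k _ _ (fun q h1 h2 => by simp [move, h1, h2])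
    rw [e1, e2, hyk, hθs, gamBar_pred j (n j) hnj]
    ring
  · -- (iv)
    intro j k hyj hyk hnk
    have hkj : k ≠ j := fun h => by rw [h] at hyk; omega
    have hθs := hθ y j k (n j + 1) (n k - 1) hyj hyk (by omega)
    have h1 : n k - 1 + 1 = n k := by omega
    have h2 : n j + 1 - 1 = n j := by omega
    rw [h1, h2] at hθs
    have hmv1 : move n k j k = n k - 1 := by simp [move, hkj]
    have hmv2 : move n k j j = n j + 1 := by simp [move, hkj.symm]
    have e1 : w y n = gamBar k (n k) ^ y k * gamBar j (n j) ^ y j *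
        ∏ q ∈ Finset.univ \ ({k, j} : Finset Λ), gamBar q (n q) ^ y q := by
      rw [hw]; exact key k j hkj y n
    have e2 : w y (move n k j) = gamBar k (n k - 1) ^ y k * gamBar j (n j + 1) ^ y j *
        ∏ q ∈ Finset.univ \ ({k, j} : Finset Λ), gamBar q (n q) ^ y q := by
      rw [hw, key k j hkj y (move n k j), hmv1, hmv2]
      congr 1
      exact tail2 k j _ _ (fun q h1 h2 => by simp [move, h1, h2])
    rw [e1, e2, hyk, ← hθs, gamBar_succ j (n j)]
    ring
  · -- (v)
    intro j j' hyj hj'j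
    have hjj' : j ≠ j' := hj'j.symm
    have hmy1 : move y j j' j = y j - 1 := by simp [move, hjj']
    have hmy2 : move y j j' j' = y j' + 1 := by simp [move, hj'j]
    have e1 : w y n = gamBar j (n j) ^ y j * gamBar j' (n j') ^ y j' *
        ∏ q ∈ Finset.univ \ ({j, j'} : Finset Λ), gamBar q (n q) ^ y q := by
      rw [hw]; exact key j j' hjj' y n
    have e2 : w (move y j j') n
        = gamBar j (n j) ^ (y j - 1) * gamBar j' (n j') ^ (y j' + 1) *
        ∏ q ∈ Finset.univ \ ({j, j'} : Finset Λ), gamBar q (n q) ^ y q := by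
      rw [hw, key j j' hjj' (move y j j') n, hmy1, hmy2]
      congr 1
      exact tail2 j j' _ _ (fun q h1 h2 => by simp [move, h1, h2])
    have a1 : gamBar j (n j) ≠ 0 := (gamBar_pos _ _).ne'
    have a2 : gamBar j' (n j') ≠ 0 := (gamBar_pos _ _).ne'
    have pyj : gamBar j (n j) ^ y j = gamBar j (n j) ^ (y j - 1) * gamBar j (n j) := by
      rw [← pow_succ]; congr 1; omega
    rw [e1, e2, hmy1, hmy2, ← hτ y j j' n hyj hj'j, pyj, pow_succ]
    field_simp
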